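/- Let Ĝ = (V, Ê) be a graph containing G as a subgraph, with maximal cliques V̂_1,…,V̂_{p̂}, and for t ∈ ℕ set I_{k,t} = {α ∈ ℕⁿ_t : Supp(α) ⊆ V̂_k}. If a linear functional L on ℝ[x]_{2t} vanishes on the truncated ideal I_{E,2t}, then L(x^α x^β) = 0 for any α, β ∈ ℕⁿ_t such that there is no k ∈ [p̂] with both α ∈ I_{k,t} and β ∈ I_{k,t}. -/

import Mathlib

open MvPolynomial

/-- Let `Ĝ` be a graph containing `G` as a subgraph, with maximal cliques
`V̂ 1, …, V̂ p̂`, and for `t ∈ ℕ` set `I k t = {α ∈ ℕⁿ_t : Supp α ⊆ V̂ k}`. If a linear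
functional `L` on `ℝ[x]_{2t}` vanishes on the truncated ideal `I_{E,2t}`, then
`L(x^α x^β) = 0` for any `α, β ∈ ℕⁿ_t` such that there is no `k` with both `α` and `β`
in `I k t`. -/
theorem vanishing_off_clique_indexed_entries
    (n phat t : ℕ) (G Ghat : SimpleGraph (Fin n)) (hGG : G ≤ Ghat)
    (Vhat : Fin phat → Set (Fin n))
    (hmax : ∀ k, Ghat.IsClique (Vhat k) ∧
      ∀ S : Set (Fin n), Ghat.IsClique S → Vhat k ⊆ S → S = Vhat k)
    (hall : ∀ S : Set (Fin n),
      (Ghat.IsClique S ∧ ∀ S' : Set (Fin n), Ghat.IsClique S' → S ⊆ S' → S' = S) →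
      ∃ k, Vhat k = S)
    (L : MvPolynomial (Fin n) ℝ →ₗ[ℝ] ℝ)
    -- `L` vanishes on the truncated ideal `I_{E,2t}` generated by the monomials `x i * x j`
    -- over the nonedges `{i,j}` of `G`, with multipliers of degree at most `2t - 2`
    (hL : ∀ i j : Fin n, i ≠ j → ¬ G.Adj i j →
      ∀ u : MvPolynomial (Fin n) ℝ, u.totalDegree ≤ 2 * t - 2 → L (u * X i * X j) = 0)
    (α β : Fin n →₀ ℕ) (hα : (∑ i, α i) ≤ t) (hβ : (∑ i, β i) ≤ t)
    (h : ¬ ∃ k, (∀ i, α i ≠ 0 → i ∈ Vhat k) ∧ (∀ i, β i ≠ 0 → i ∈ Vhat k)) :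
    L (monomial α 1 * monomial β 1) = 0 := by
  set S : Set (Fin n) := {i | α i ≠ 0 ∨ β i ≠ 0} with hS
  by_cases hc : Ghat.IsClique S
  · exfalso
    -- extend S to a maximal clique
    set T : Set (Set (Fin n)) := {S' | Ghat.IsClique S' ∧ S ⊆ S'} with hT
    have hTfin : T.Finite := Set.toFinite T
    obtain ⟨M, hMT, hMmax⟩ : ∃ M ∈ T, ∀ M' ∈ T, id M ≤ id M' → id M = id M' := by
      obtain ⟨M, hM⟩ := Set.Finite.exists_maximal hTfin ⟨S, hc, subset_rfl⟩
      exact ⟨M, hM.1, fun M' hM' hle => le_antisymm hle (hM.2 hM' hle)⟩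
    have hMmax' : ∀ S' : Set (Fin n), Ghat.IsClique S' → M ⊆ S' → S' = M := by
      intro S' hS' hsub
      exact (hMmax S' ⟨hS', hMT.2.trans hsub⟩ hsub).symm
    obtain ⟨k, hk⟩ := hall M ⟨hMT.1, hMmax'⟩
    exact h ⟨k, fun i hi => hk ▸ hMT.2 (Or.inl hi), fun i hi => hk ▸ hMT.2 (Or.inr hi)⟩
  · rw [SimpleGraph.isClique_iff, Set.Pairwise] at hc
    push_neg at hc
    obtain ⟨i, hiS, j, hjS, hij, hnadj⟩ := hc
    have hnadjG : ¬ G.Adj i j := fun hadj => hnadj (hGG hadj)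
    set γ : (Fin n) →₀ ℕ := (α + β) - (Finsupp.single i 1 + Finsupp.single j 1) with hγdef
    have hi1 : 1 ≤ α i + β i := by
      have := hiS; simp only [hS, Set.mem_setOf_eq] at this; omega
    have hj1 : 1 ≤ α j + β j := by
      have := hjS; simp only [hS, Set.mem_setOf_eq] at this; omega
    have hγ : γ + Finsupp.single i 1 + Finsupp.single j 1 = α + β := by
      ext a
      simp only [hγdef, Finsupp.add_apply, Finsupp.tsub_apply, Finsupp.single_apply]
      rcases eq_or_ne i a with e1 | e1 <;> rcases eq_or_ne j a with e2 | e2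
      · exact absurd (e1.trans e2.symm) hij
      · subst e1; simp only [if_pos rfl, if_neg e2, if_true]; omega
      · subst e2; simp only [if_pos rfl, if_neg e1, if_true]; omega
      · simp only [if_neg e1, if_neg e2]; omega
    have hsum : (∑ a, γ a) + 2 = (∑ a, α a) + (∑ a, β a) := by
      have := congrArg (fun f : (Fin n) →₀ ℕ => ∑ a, f a) hγ
      simp only [Finsupp.add_apply, Finset.sum_add_distrib, Finsupp.single_apply,
        Finset.sum_ite_eq, Finset.mem_univ, if_true] at this
      omega
    have hdeg : (monomial γ (1:ℝ)).totalDegree ≤ 2 * t - 2 := by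
      rw [totalDegree_monomial _ (one_ne_zero)]
      have : γ.sum (fun _ e => e) = ∑ a, γ a := Finsupp.sum_fintype _ _ (fun _ => rfl)
      rw [this]
      omega
    have hmono : monomial α (1:ℝ) * monomial β 1 =
        monomial γ 1 * X i * X j := by
      rw [monomial_mul, one_mul]
      rw [X, X, monomial_mul, monomial_mul, one_mul, one_mul, hγ]
    rw [hmono]
    exact hL i j hij hnadjG _ hdeg
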